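/- Let a > 0 be a fixed real number and p a fixed nonnegative integer. Then there exists C > 0 and ε₀ > 0 such that, for all 0 < ε < ε₀ and all b ≥ 0, ∑_{n≥1} (a n² + b n)^p e^{-ε(a n² + b n)} ≤ C · (ε^{-p-1/2} + b^p) · e^{-εb}. -/

import Mathlib

open Real

private lemma half_le_one_sub_exp (x : ℝ) (h0 : 0 ≤ x) (h1 : x ≤ 1) :
    x / 2 ≤ 1 - Real.exp (-x) := by
  have he : 1 + x ≤ Real.exp x := by linarith [Real.add_one_le_exp x]
  have hu : Real.exp (-x) * Real.exp x = 1 := by rw [← Real.exp_add]; simp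
  have hup : 0 < Real.exp (-x) := Real.exp_pos _
  nlinarith [mul_le_mul_of_nonneg_left he hup.le, mul_nonneg h0 (sub_nonneg.mpr h1)]

private lemma geom_bound (c : ℝ) (h0 : 0 < c) (h1 : c ≤ 1) :
    Summable (fun n : ℕ => Real.exp (-(c * ((n : ℝ) + 1)))) ∧
    ∑' n : ℕ, Real.exp (-(c * ((n : ℝ) + 1))) ≤ 2 / c := by
  have hr0 : 0 ≤ Real.exp (-c) := (Real.exp_pos _).le
  have hr1 : Real.exp (-c) < 1 := by
    rw [Real.exp_lt_one_iff]; linarith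
  have hfun : (fun n : ℕ => Real.exp (-(c * ((n : ℝ) + 1)))) =
      fun n : ℕ => Real.exp (-c) * Real.exp (-c) ^ n := by
    funext n
    rw [show -(c * ((n : ℝ) + 1)) = -c + (n : ℝ) * (-c) by ring, Real.exp_add,
      Real.exp_nat_mul]
  have hsum : Summable fun n : ℕ => Real.exp (-c) * Real.exp (-c) ^ n :=
    (summable_geometric_of_lt_one hr0 hr1).mul_left _
  constructor
  · rw [hfun]; exact hsum
  · rw [hfun, tsum_mul_left, tsum_geometric_of_lt_one hr0 hr1]
    have h2 : c / 2 ≤ 1 - Real.exp (-c) := half_le_one_sub_exp c h0.le h1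
    have hpos : 0 < 1 - Real.exp (-c) := by linarith
    have hinv : (1 - Real.exp (-c))⁻¹ ≤ (c / 2)⁻¹ := by
      apply inv_anti₀ (by positivity) h2
    calc Real.exp (-c) * (1 - Real.exp (-c))⁻¹ ≤ 1 * (c / 2)⁻¹ := by
          apply mul_le_mul hr1.le hinv (by positivity) (by norm_num)
      _ = 2 / c := by rw [one_mul, inv_div]

private lemma pow_mul_exp_neg_le (p : ℕ) (t : ℝ) (ht : 0 ≤ t) :
    t ^ p * Real.exp (-t) ≤ (p.factorial : ℝ) := by
  have h : t ^ p / (p.factorial : ℝ) ≤ Real.exp t := Real.pow_div_factorial_le_exp t ht p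
  have hfp : (0:ℝ) < (p.factorial : ℝ) := by exact_mod_cast p.factorial_pos
  rw [Real.exp_neg]
  rw [div_le_iff₀ hfp] at h
  have hexp : 0 < Real.exp t := Real.exp_pos t
  rw [mul_inv_le_iff₀ hexp]
  linarith [h]

private lemma add_pow_le2 (x y : ℝ) (hx : 0 ≤ x) (hy : 0 ≤ y) (p : ℕ) :
    (x + y) ^ p ≤ 2 ^ p * (x ^ p + y ^ p) := by
  rcases le_total x y with h | h
  · calc (x + y) ^ p ≤ (2 * y) ^ p := pow_le_pow_left₀ (by linarith) (by linarith) p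
      _ = 2 ^ p * y ^ p := mul_pow 2 y p
      _ ≤ 2 ^ p * (x ^ p + y ^ p) := by
          have := pow_nonneg hx p
          have h2 : (0:ℝ) ≤ 2 ^ p := by positivity
          nlinarith
  · calc (x + y) ^ p ≤ (2 * x) ^ p := pow_le_pow_left₀ (by linarith) (by linarith) p
      _ = 2 ^ p * x ^ p := mul_pow 2 x p
      _ ≤ 2 ^ p * (x ^ p + y ^ p) := by
          have := pow_nonneg hy p
          have h2 : (0:ℝ) ≤ 2 ^ p := by positivity
          nlinarith

private lemma sum_pow_exp (q : ℕ) (d : ℝ) (hd0 : 0 < d) (hd1 : d ≤ 1) :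
    Summable (fun n : ℕ => ((n : ℝ) + 1) ^ (2 * q) * Real.exp (-(d * ((n : ℝ) + 1) ^ 2))) ∧
    ∑' n : ℕ, ((n : ℝ) + 1) ^ (2 * q) * Real.exp (-(d * ((n : ℝ) + 1) ^ 2))
      ≤ ((q.factorial : ℝ) * (2 / d) ^ q * Real.exp 1) * (4 / Real.sqrt d) := by
  set c := Real.sqrt (d / 2) with hc
  have hc0 : 0 < c := Real.sqrt_pos.mpr (by linarith)
  have hc1 : c ≤ 1 := by
    rw [hc, show (1:ℝ) = Real.sqrt 1 from Real.sqrt_one.symm]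
    exact Real.sqrt_le_sqrt (by linarith)
  obtain ⟨hgs, hgb⟩ := geom_bound c hc0 hc1
  have hM0 : (0:ℝ) ≤ (q.factorial : ℝ) * (2 / d) ^ q * Real.exp 1 := by positivity
  have key : ∀ n : ℕ, ((n : ℝ) + 1) ^ (2 * q) * Real.exp (-(d * ((n : ℝ) + 1) ^ 2))
      ≤ ((q.factorial : ℝ) * (2 / d) ^ q * Real.exp 1) * Real.exp (-(c * ((n : ℝ) + 1))) := by
    intro n
    set x := (n : ℝ) + 1 with hx
    have hx0 : (0:ℝ) ≤ x := by positivity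
    have h1 : x ^ (2 * q) * Real.exp (-(d / 2 * x ^ 2)) ≤ (q.factorial : ℝ) * (2 / d) ^ q := by
      have hple := pow_mul_exp_neg_le q (d / 2 * x ^ 2) (by positivity)
      have hxq : x ^ (2 * q) = (x ^ 2) ^ q := by rw [pow_mul]
      rw [hxq]
      have hne : d ≠ 0 := ne_of_gt hd0
      calc (x ^ 2) ^ q * Real.exp (-(d / 2 * x ^ 2))
          = (d / 2 * x ^ 2) ^ q * Real.exp (-(d / 2 * x ^ 2)) * (2 / d) ^ q := by
            rw [mul_pow, div_pow, div_pow]; field_simp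
        _ ≤ (q.factorial : ℝ) * (2 / d) ^ q :=
            mul_le_mul_of_nonneg_right hple (by positivity)
    have h2 : Real.exp (-(d / 2 * x ^ 2)) ≤ Real.exp 1 * Real.exp (-(c * x)) := by
      rw [← Real.exp_add]
      apply Real.exp_le_exp.mpr
      have hcx : (c * x) ^ 2 = d / 2 * x ^ 2 := by
        rw [mul_pow, hc, Real.sq_sqrt (by linarith : (0:ℝ) ≤ d / 2)]
      nlinarith [sq_nonneg (c * x - 1)]
    have hsplit : Real.exp (-(d * x ^ 2)) =
        Real.exp (-(d / 2 * x ^ 2)) * Real.exp (-(d / 2 * x ^ 2)) := by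
      rw [← Real.exp_add]; ring_nf
    calc x ^ (2 * q) * Real.exp (-(d * x ^ 2))
        = x ^ (2 * q) * Real.exp (-(d / 2 * x ^ 2)) * Real.exp (-(d / 2 * x ^ 2)) := by
          rw [hsplit]; ring
      _ ≤ ((q.factorial : ℝ) * (2 / d) ^ q) * (Real.exp 1 * Real.exp (-(c * x))) := by
          apply mul_le_mul h1 h2 (Real.exp_pos _).le (by positivity)
      _ = ((q.factorial : ℝ) * (2 / d) ^ q * Real.exp 1) * Real.exp (-(c * x)) := by ring
  have hs : Summable (fun n : ℕ => ((n : ℝ) + 1) ^ (2 * q) * Real.exp (-(d * ((n : ℝ) + 1) ^ 2))) :=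
    Summable.of_nonneg_of_le (fun n => by positivity) key (hgs.mul_left _)
  refine ⟨hs, ?_⟩
  have hsd0 : 0 < Real.sqrt d := Real.sqrt_pos.mpr hd0
  have hcle : 2 / c ≤ 4 / Real.sqrt d := by
    have hsd : Real.sqrt d / 2 ≤ c := by
      rw [hc]
      rw [show Real.sqrt d / 2 = Real.sqrt d * Real.sqrt (4:ℝ)⁻¹ by
        rw [show ((4:ℝ)⁻¹) = (1/2 : ℝ)^2 by norm_num, Real.sqrt_sq (by norm_num : (0:ℝ) ≤ 1/2)]
        ring]
      rw [← Real.sqrt_mul hd0.le]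
      exact Real.sqrt_le_sqrt (by linarith)
    calc 2 / c ≤ 2 / (Real.sqrt d / 2) := by
          apply div_le_div_of_nonneg_left (by norm_num) (by positivity) hsd
      _ = 4 / Real.sqrt d := by
          field_simp
          ring
  calc ∑' n : ℕ, ((n : ℝ) + 1) ^ (2 * q) * Real.exp (-(d * ((n : ℝ) + 1) ^ 2))
      ≤ ∑' n : ℕ, ((q.factorial : ℝ) * (2 / d) ^ q * Real.exp 1) * Real.exp (-(c * ((n:ℝ)+1))) :=
        Summable.tsum_le_tsum key hs (hgs.mul_left _)
    _ = ((q.factorial : ℝ) * (2 / d) ^ q * Real.exp 1) * ∑' n : ℕ, Real.exp (-(c * ((n:ℝ)+1))) :=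
        tsum_mul_left
    _ ≤ ((q.factorial : ℝ) * (2 / d) ^ q * Real.exp 1) * (2 / c) :=
        mul_le_mul_of_nonneg_left hgb hM0
    _ ≤ ((q.factorial : ℝ) * (2 / d) ^ q * Real.exp 1) * (4 / Real.sqrt d) :=
        mul_le_mul_of_nonneg_left hcle hM0

set_option maxHeartbeats 2000000 in
/-- For fixed `a > 0` and `p ∈ ℕ`, uniformly in `b ≥ 0` and small `ε > 0`,
`∑_{n≥1} (an²+bn)^p e^{-ε(an²+bn)} ≤ C (ε^{-p-1/2} + b^p) e^{-εb}`. -/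
theorem sum_quadratic_pow_exp_bound (a : ℝ) (ha : 0 < a) (p : ℕ) :
    ∃ C > 0, ∃ ε₀ > 0, ∀ ε : ℝ, 0 < ε → ε < ε₀ → ∀ b : ℝ, 0 ≤ b →
      ∑' n : ℕ, (a * ((n : ℝ) + 1) ^ 2 + b * ((n : ℝ) + 1)) ^ p *
          Real.exp (-ε * (a * ((n : ℝ) + 1) ^ 2 + b * ((n : ℝ) + 1)))
        ≤ C * (ε ^ (-(p : ℝ) - 1 / 2) + b ^ p) * Real.exp (-ε * b) := by
  have hsa : 0 < Real.sqrt a := Real.sqrt_pos.mpr ha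
  have hfp : (0:ℝ) < (p.factorial : ℝ) := by exact_mod_cast p.factorial_pos
  have hap : (0:ℝ) < a ^ p := pow_pos ha p
  set fp : ℝ := (p.factorial : ℝ) with hfpdef
  set D1 : ℝ := 2 ^ p * fp * ((2:ℝ) ^ p + 4 ^ p) * Real.exp 1 * 4 / Real.sqrt a with hD1def
  have hD1 : 0 < D1 := by
    rw [hD1def]; apply div_pos _ hsa; positivity
  set C : ℝ := 2 ^ p * a ^ p + 2 ^ p + D1 with hCdef
  have hC : 0 < C := by
    rw [hCdef]
    have h1 : (0:ℝ) < 2 ^ p * a ^ p := by positivity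
    have h2 : (0:ℝ) < (2:ℝ) ^ p := by positivity
    linarith
  refine ⟨C, hC, min 1 a⁻¹, lt_min one_pos (inv_pos.mpr ha), ?_⟩
  intro ε hε hεlt b hb
  have hε1 : ε < 1 := lt_of_lt_of_le hεlt (min_le_left _ _)
  have hδ1 : ε * a ≤ 1 := by
    have h := lt_of_lt_of_le hεlt (min_le_right _ _)
    have h2 := mul_lt_mul_of_pos_right h ha
    rw [inv_mul_cancel₀ ha.ne'] at h2
    linarith
  have hδ0 : 0 < ε * a := mul_pos hε ha
  have hse : 0 < Real.sqrt ε := Real.sqrt_pos.mpr hε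
  have hX : ε ^ (-(p : ℝ) - 1 / 2) = (ε ^ p * Real.sqrt ε)⁻¹ := by
    rw [show -(p : ℝ) - 1 / 2 = -((p : ℝ) + 1 / 2) by ring, Real.rpow_neg hε.le,
      Real.rpow_add hε, Real.rpow_natCast, Real.sqrt_eq_rpow]
  have hXpos : 0 < (ε ^ p * Real.sqrt ε)⁻¹ := by positivity
  have hXge1 : 1 ≤ (ε ^ p * Real.sqrt ε)⁻¹ := by
    have h1 : ε ^ p * Real.sqrt ε ≤ 1 := by
      have h2 : ε ^ p ≤ 1 := pow_le_one₀ hε.le hε1.le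
      have h3 : Real.sqrt ε ≤ 1 := by
        rw [show (1:ℝ) = Real.sqrt 1 from Real.sqrt_one.symm]
        exact Real.sqrt_le_sqrt hε1.le
      nlinarith [hse]
    calc (1:ℝ) = 1⁻¹ := by norm_num
      _ ≤ (ε ^ p * Real.sqrt ε)⁻¹ := inv_anti₀ (by positivity) h1
  simp only [neg_mul]
  rw [hX]
  set F : ℕ → ℝ := fun n => (a * ((n : ℝ) + 1) ^ 2 + b * ((n : ℝ) + 1)) ^ p *
      Real.exp (-(ε * (a * ((n : ℝ) + 1) ^ 2 + b * ((n : ℝ) + 1)))) with hFdef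
  set H : ℕ → ℝ := fun n =>
      2 ^ p * a ^ p * (((n : ℝ) + 1) ^ (2 * p) * Real.exp (-(ε * a * ((n : ℝ) + 1) ^ 2)))
      + 2 ^ p * (fp * (4 / ε) ^ p) *
          (((n : ℝ) + 1) ^ (2 * 0) * Real.exp (-(ε * a * ((n : ℝ) + 1) ^ 2))) with hHdef
  obtain ⟨hS1, hB1⟩ := sum_pow_exp p (ε * a) hδ0 hδ1
  obtain ⟨hS0, hB0⟩ := sum_pow_exp 0 (ε * a) hδ0 hδ1
  have hHs : Summable H := (hS1.mul_left _).add (hS0.mul_left _)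
  have hHnn : ∀ n, 0 ≤ H n := by
    intro n
    apply add_nonneg
    · exact mul_nonneg (mul_nonneg (by positivity) hap.le) (by positivity)
    · positivity
  have hqnn : ∀ n : ℕ, 0 ≤ a * ((n : ℝ) + 1) ^ 2 + b * ((n : ℝ) + 1) := by
    intro n
    have h1 : (0:ℝ) ≤ ((n : ℝ) + 1) := by positivity
    exact add_nonneg (mul_nonneg ha.le (by positivity)) (mul_nonneg hb h1)
  have hFnn : ∀ n, 0 ≤ F n := fun n =>
    mul_nonneg (pow_nonneg (hqnn n) p) (Real.exp_pos _).le
  -- pointwise bound for shifted terms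
  have hFH : ∀ n : ℕ, F (n + 1) ≤ Real.exp (-(ε * b)) * H (n + 1) := by
    intro n
    have hm : ((n + 1 : ℕ) : ℝ) + 1 = (n : ℝ) + 2 := by push_cast; ring
    have hFv : F (n + 1) = (a * ((n : ℝ) + 2) ^ 2 + b * ((n : ℝ) + 2)) ^ p *
        Real.exp (-(ε * (a * ((n : ℝ) + 2) ^ 2 + b * ((n : ℝ) + 2)))) := by
      simp only [hFdef, hm]
    have hHv : H (n + 1) =
        2 ^ p * a ^ p * (((n : ℝ) + 2) ^ (2 * p) * Real.exp (-(ε * a * ((n : ℝ) + 2) ^ 2)))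
        + 2 ^ p * (fp * (4 / ε) ^ p) *
            (((n : ℝ) + 2) ^ (2 * 0) * Real.exp (-(ε * a * ((n : ℝ) + 2) ^ 2))) := by
      simp only [hHdef, hm]
    rw [hFv, hHv]
    set m : ℝ := (n : ℝ) + 2 with hmdef
    have hm2 : (2:ℝ) ≤ m := by
      rw [hmdef]; have : (0:ℝ) ≤ (n : ℝ) := Nat.cast_nonneg n; linarith
    have hm0 : (0:ℝ) < m := by linarith
    have hexp_split : Real.exp (-(ε * (a * m ^ 2 + b * m))) =
        Real.exp (-(ε * a * m ^ 2)) * Real.exp (-(ε * b * m)) := by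
      rw [← Real.exp_add]; ring_nf
    have hpow : (a * m ^ 2 + b * m) ^ p ≤ 2 ^ p * ((a * m ^ 2) ^ p + (b * m) ^ p) :=
      add_pow_le2 _ _ (mul_nonneg ha.le (by positivity)) (mul_nonneg hb hm0.le) p
    have hebm : Real.exp (-(ε * b * m)) ≤ Real.exp (-(ε * b)) := by
      apply Real.exp_le_exp.mpr
      nlinarith [mul_nonneg hε.le hb]
    have hBpart : (b * m) ^ p * Real.exp (-(ε * b * m)) ≤
        Real.exp (-(ε * b)) * (fp * (4 / ε) ^ p) := by
      have hsplit2 : Real.exp (-(ε * b * m)) =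
          Real.exp (-(ε * b)) * Real.exp (-(ε * b * (m - 1))) := by
        rw [← Real.exp_add]; ring_nf
      set t : ℝ := ε * b * m / 4 with htdef
      have ht0 : 0 ≤ t := by
        rw [htdef]
        exact div_nonneg (mul_nonneg (mul_nonneg hε.le hb) hm0.le) (by norm_num)
      have h1 : Real.exp (-(ε * b * (m - 1))) ≤ Real.exp (-t) * Real.exp (-t) := by
        rw [← Real.exp_add]
        apply Real.exp_le_exp.mpr
        rw [htdef]
        have h2 : ε * b * (m / 2) ≤ ε * b * (m - 1) := by
          apply mul_le_mul_of_nonneg_left _ (mul_nonneg hε.le hb)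
          linarith
        linarith
      have hbm : (b * m) ^ p = (4 / ε) ^ p * t ^ p := by
        rw [← mul_pow]
        congr 1
        rw [htdef]
        field_simp
      have hexp_le1 : Real.exp (-t) ≤ 1 := by
        rw [← Real.exp_zero]
        exact Real.exp_le_exp.mpr (by linarith)
      have hkey : (b * m) ^ p * (Real.exp (-t) * Real.exp (-t)) ≤ fp * (4 / ε) ^ p := by
        rw [hbm]
        have hptle := pow_mul_exp_neg_le p t ht0
        calc (4 / ε) ^ p * t ^ p * (Real.exp (-t) * Real.exp (-t))
            = (4 / ε) ^ p * (t ^ p * Real.exp (-t)) * Real.exp (-t) := by ring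
          _ ≤ (4 / ε) ^ p * fp * 1 := by
              apply mul_le_mul _ hexp_le1 (Real.exp_pos _).le (by positivity)
              exact mul_le_mul_of_nonneg_left hptle (by positivity)
          _ = fp * (4 / ε) ^ p := by ring
      calc (b * m) ^ p * Real.exp (-(ε * b * m))
          = Real.exp (-(ε * b)) * ((b * m) ^ p * Real.exp (-(ε * b * (m - 1)))) := by
            rw [hsplit2]; ring
        _ ≤ Real.exp (-(ε * b)) * ((b * m) ^ p * (Real.exp (-t) * Real.exp (-t))) := by
            apply mul_le_mul_of_nonneg_left _ (Real.exp_pos _).le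
            exact mul_le_mul_of_nonneg_left h1 (pow_nonneg (mul_nonneg hb hm0.le) p)
        _ ≤ Real.exp (-(ε * b)) * (fp * (4 / ε) ^ p) :=
            mul_le_mul_of_nonneg_left hkey (Real.exp_pos _).le
    have hA1 : (0:ℝ) ≤ (a * m ^ 2) ^ p := pow_nonneg (mul_nonneg ha.le (by positivity)) p
    have hampow : (a * m ^ 2) ^ p = a ^ p * m ^ (2 * p) := by
      rw [mul_pow, pow_mul]
    calc (a * m ^ 2 + b * m) ^ p * Real.exp (-(ε * (a * m ^ 2 + b * m)))
        = (a * m ^ 2 + b * m) ^ p * (Real.exp (-(ε * a * m ^ 2)) * Real.exp (-(ε * b * m))) := by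
          rw [hexp_split]
      _ ≤ 2 ^ p * ((a * m ^ 2) ^ p + (b * m) ^ p) *
            (Real.exp (-(ε * a * m ^ 2)) * Real.exp (-(ε * b * m))) := by
          apply mul_le_mul_of_nonneg_right hpow (by positivity)
      _ = 2 ^ p * (a * m ^ 2) ^ p * Real.exp (-(ε * a * m ^ 2)) * Real.exp (-(ε * b * m))
          + 2 ^ p * Real.exp (-(ε * a * m ^ 2)) * ((b * m) ^ p * Real.exp (-(ε * b * m))) := by
          ring
      _ ≤ 2 ^ p * (a * m ^ 2) ^ p * Real.exp (-(ε * a * m ^ 2)) * Real.exp (-(ε * b))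
          + 2 ^ p * Real.exp (-(ε * a * m ^ 2)) * (Real.exp (-(ε * b)) * (fp * (4 / ε) ^ p)) := by
          apply add_le_add
          · apply mul_le_mul_of_nonneg_left hebm
            exact mul_nonneg (mul_nonneg (by positivity) hA1) (Real.exp_pos _).le
          · exact mul_le_mul_of_nonneg_left hBpart (by positivity)
      _ = Real.exp (-(ε * b)) *
            (2 ^ p * a ^ p * (m ^ (2 * p) * Real.exp (-(ε * a * m ^ 2)))
            + 2 ^ p * (fp * (4 / ε) ^ p) * (m ^ (2 * 0) * Real.exp (-(ε * a * m ^ 2)))) := by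
          rw [hampow, show (2 * 0 : ℕ) = 0 by norm_num, pow_zero]
          ring
  have hHshift : Summable (fun n : ℕ => H (n + 1)) := (summable_nat_add_iff 1).mpr hHs
  have hFshift : Summable (fun n : ℕ => F (n + 1)) :=
    Summable.of_nonneg_of_le (fun n => hFnn _) hFH (hHshift.mul_left _)
  have hFs : Summable F := (summable_nat_add_iff 1).mp hFshift
  have hHshift_le : ∑' n : ℕ, H (n + 1) ≤ ∑' n : ℕ, H n := by
    rw [Summable.tsum_eq_zero_add hHs]
    linarith [hHnn 0]
  -- bound on F 0
  have hF0 : F 0 ≤ Real.exp (-(ε * b)) *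
      (2 ^ p * a ^ p * (ε ^ p * Real.sqrt ε)⁻¹ + 2 ^ p * b ^ p) := by
    have hF0v : F 0 = (a + b) ^ p * Real.exp (-(ε * (a + b))) := by
      simp [hFdef]
    have hsplit : Real.exp (-(ε * (a + b))) = Real.exp (-(ε * a)) * Real.exp (-(ε * b)) := by
      rw [← Real.exp_add]; ring_nf
    have hea1 : Real.exp (-(ε * a)) ≤ 1 := by
      rw [← Real.exp_zero]
      apply Real.exp_le_exp.mpr
      nlinarith
    have hab : (a + b) ^ p ≤ 2 ^ p * (a ^ p + b ^ p) := add_pow_le2 a b ha.le hb p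
    have hnn : (0:ℝ) ≤ 2 ^ p * (a ^ p + b ^ p) := by
      have := pow_nonneg hb p
      positivity
    calc F 0 = (a + b) ^ p * (Real.exp (-(ε * a)) * Real.exp (-(ε * b))) := by
          rw [hF0v, hsplit]
      _ ≤ 2 ^ p * (a ^ p + b ^ p) * (1 * Real.exp (-(ε * b))) := by
          apply mul_le_mul hab _ (by positivity) hnn
          exact mul_le_mul_of_nonneg_right hea1 (Real.exp_pos _).le
      _ ≤ Real.exp (-(ε * b)) * (2 ^ p * a ^ p * (ε ^ p * Real.sqrt ε)⁻¹ + 2 ^ p * b ^ p) := by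
          have hprod : 0 ≤ Real.exp (-(ε * b)) * (2 ^ p * (a ^ p * ((ε ^ p * Real.sqrt ε)⁻¹ - 1))) :=
            mul_nonneg (Real.exp_pos _).le
              (mul_nonneg (by positivity) (mul_nonneg hap.le (by linarith)))
          nlinarith [hprod]
  -- bound on tsum H
  have hHbound : ∑' n : ℕ, H n ≤ D1 * (ε ^ p * Real.sqrt ε)⁻¹ := by
    have htsum : ∑' n : ℕ, H n =
        2 ^ p * a ^ p * (∑' n : ℕ, ((n : ℝ) + 1) ^ (2 * p) * Real.exp (-(ε * a * ((n : ℝ) + 1) ^ 2)))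
        + 2 ^ p * (fp * (4 / ε) ^ p) *
            (∑' n : ℕ, ((n : ℝ) + 1) ^ (2 * 0) * Real.exp (-(ε * a * ((n : ℝ) + 1) ^ 2))) := by
      rw [hHdef, Summable.tsum_add (hS1.mul_left _) (hS0.mul_left _), tsum_mul_left, tsum_mul_left]
    rw [htsum]
    have step : 2 ^ p * a ^ p *
          (∑' n : ℕ, ((n : ℝ) + 1) ^ (2 * p) * Real.exp (-(ε * a * ((n : ℝ) + 1) ^ 2)))
        + 2 ^ p * (fp * (4 / ε) ^ p) *
          (∑' n : ℕ, ((n : ℝ) + 1) ^ (2 * 0) * Real.exp (-(ε * a * ((n : ℝ) + 1) ^ 2)))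
        ≤ 2 ^ p * a ^ p * ((fp * (2 / (ε * a)) ^ p * Real.exp 1) * (4 / Real.sqrt (ε * a)))
        + 2 ^ p * (fp * (4 / ε) ^ p) *
            ((((0:ℕ).factorial : ℝ) * (2 / (ε * a)) ^ 0 * Real.exp 1) * (4 / Real.sqrt (ε * a))) := by
      apply add_le_add
      · exact mul_le_mul_of_nonneg_left hB1 (mul_nonneg (by positivity) hap.le)
      · exact mul_le_mul_of_nonneg_left hB0 (by positivity)
    refine le_trans step (le_of_eq ?_)
    rw [Real.sqrt_mul hε.le a, hD1def]
    simp only [Nat.factorial_zero, Nat.cast_one, pow_zero]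
    field_simp
    have e1 : a ^ p * a⁻¹ ^ p = 1 := by rw [← mul_pow, mul_inv_cancel₀ ha.ne', one_pow]
    have e2 : ε ^ p * ε⁻¹ ^ p = 1 := by rw [← mul_pow, mul_inv_cancel₀ hε.ne', one_pow]
    linear_combination (2 ^ p * (a ^ p * a⁻¹ ^ p)) * e2 + 2 ^ p * e1 + 4 ^ p * e2
  -- assemble
  calc ∑' n : ℕ, F n = F 0 + ∑' n : ℕ, F (n + 1) := Summable.tsum_eq_zero_add hFs
    _ ≤ Real.exp (-(ε * b)) * (2 ^ p * a ^ p * (ε ^ p * Real.sqrt ε)⁻¹ + 2 ^ p * b ^ p)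
        + ∑' n : ℕ, Real.exp (-(ε * b)) * H (n + 1) :=
        add_le_add hF0 (Summable.tsum_le_tsum hFH hFshift (hHshift.mul_left _))
    _ = Real.exp (-(ε * b)) * (2 ^ p * a ^ p * (ε ^ p * Real.sqrt ε)⁻¹ + 2 ^ p * b ^ p)
        + Real.exp (-(ε * b)) * ∑' n : ℕ, H (n + 1) := by rw [tsum_mul_left]
    _ ≤ Real.exp (-(ε * b)) * (2 ^ p * a ^ p * (ε ^ p * Real.sqrt ε)⁻¹ + 2 ^ p * b ^ p)
        + Real.exp (-(ε * b)) * (D1 * (ε ^ p * Real.sqrt ε)⁻¹) := by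
        apply add_le_add_right
        exact mul_le_mul_of_nonneg_left (le_trans hHshift_le hHbound) (Real.exp_pos _).le
    _ ≤ C * ((ε ^ p * Real.sqrt ε)⁻¹ + b ^ p) * Real.exp (-(ε * b)) := by
        have hbp : (0:ℝ) ≤ b ^ p := pow_nonneg hb p
        have e0 : (0:ℝ) ≤ Real.exp (-(ε * b)) := (Real.exp_pos _).le
        have key : C * ((ε ^ p * Real.sqrt ε)⁻¹ + b ^ p) * Real.exp (-(ε * b))
            - (Real.exp (-(ε * b)) * (2 ^ p * a ^ p * (ε ^ p * Real.sqrt ε)⁻¹ + 2 ^ p * b ^ p)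
              + Real.exp (-(ε * b)) * (D1 * (ε ^ p * Real.sqrt ε)⁻¹))
            = Real.exp (-(ε * b)) * (2 ^ p * (ε ^ p * Real.sqrt ε)⁻¹)
              + Real.exp (-(ε * b)) * ((2 ^ p * a ^ p + D1) * b ^ p) := by
          rw [hCdef]; ring
        have h1 : (0:ℝ) ≤ Real.exp (-(ε * b)) * (2 ^ p * (ε ^ p * Real.sqrt ε)⁻¹) :=
          mul_nonneg e0 (by positivity)
        have h2 : (0:ℝ) ≤ Real.exp (-(ε * b)) * ((2 ^ p * a ^ p + D1) * b ^ p) :=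
          mul_nonneg e0 (mul_nonneg (by nlinarith) hbp)
        linarith
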